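/- Let G be a triangle-free simple graph with m edges. Then the spectral radius of the adjacency matrix of G satisfies λ(G) ≤ √m. -/

import Mathlib

open Finset Matrix

lemma nosal_sq {V : Type*} [Fintype V] [DecidableEq V]
    (G : SimpleGraph V) [DecidableRel G.Adj]
    (hG : G.CliqueFree 3) (μ : ℝ) (x : V → ℝ) (hx : x ≠ 0)
    (hev : G.adjMatrix ℝ *ᵥ x = μ • x) :
    μ ^ 2 ≤ (G.edgeFinset.card : ℝ) := by
  classical
  -- pick u maximizing |x u|
  rcases Function.ne_iff.mp hx with ⟨w, hw⟩
  obtain ⟨u, -, hu⟩ := Finset.exists_max_image Finset.univ (fun v => |x v|) ⟨w, Finset.mem_univ w⟩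
  have hc : 0 < |x u| := lt_of_lt_of_le (abs_pos.mpr hw) (hu w (mem_univ w))
  set c := |x u| with hcdef
  -- A² x = μ² x
  have h2 : G.adjMatrix ℝ *ᵥ (G.adjMatrix ℝ *ᵥ x) = (μ ^ 2) • x := by
    rw [hev, Matrix.mulVec_smul, hev, smul_smul, sq]
  have key : μ ^ 2 * x u = ∑ p ∈ (G.neighborFinset u).sigma (fun v => G.neighborFinset v), x p.2 := by
    have := congrFun h2 u
    rw [Finset.sum_sigma]
    simpa [SimpleGraph.adjMatrix_mulVec_apply] using this.symm
  set S := (G.neighborFinset u).sigma (fun v => G.neighborFinset v) with hS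
  have hcard : S.card ≤ G.edgeFinset.card := by
    apply Finset.card_le_card_of_injOn (fun p => s(p.1, p.2))
    · rintro ⟨a, b⟩ hp
      change (⟨a, b⟩ : Σ _ : V, V) ∈ S at hp
      simp only [hS, Finset.mem_sigma, SimpleGraph.mem_neighborFinset] at hp
      exact SimpleGraph.mem_edgeFinset.mpr hp.2
    · intro p hp q hq heq
      rw [Finset.mem_coe, hS, Finset.mem_sigma] at hp hq
      simp only [SimpleGraph.mem_neighborFinset] at hp hq
      rcases Sym2.eq_iff.mp heq with ⟨h1, h2⟩ | ⟨h1, h2⟩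
      · exact Sigma.ext h1 (heq_of_eq h2)
      · exfalso
        exact hG {u, p.1, p.2} (SimpleGraph.is3Clique_triple_iff.mpr
          ⟨hp.1, h2 ▸ hq.1, hp.2⟩)
  have hbound : μ ^ 2 * c ≤ (G.edgeFinset.card : ℝ) * c := by
    calc μ ^ 2 * c = |μ ^ 2 * x u| := by
            rw [abs_mul, abs_of_nonneg (sq_nonneg μ)]
      _ = |∑ p ∈ S, x p.2| := by rw [key]
      _ ≤ ∑ p ∈ S, |x p.2| := Finset.abs_sum_le_sum_abs _ _
      _ ≤ ∑ _p ∈ S, c := Finset.sum_le_sum (fun p _ => hu p.2 (mem_univ _))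
      _ = (S.card : ℝ) * c := by rw [Finset.sum_const, nsmul_eq_mul]
      _ ≤ (G.edgeFinset.card : ℝ) * c := by
            exact mul_le_mul_of_nonneg_right (by exact_mod_cast hcard) (le_of_lt hc)
  exact le_of_mul_le_mul_right hbound hc

theorem stmt_13 {V : Type*} [Fintype V] [DecidableEq V]
    (G : SimpleGraph V) [DecidableRel G.Adj]
    (hG : G.CliqueFree 3)
    (hA : (G.adjMatrix ℝ).IsHermitian)
    (m : ℕ) (hm : m = G.edgeFinset.card) :
    ∀ i, hA.eigenvalues i ≤ Real.sqrt m := by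
  intro i
  set μ := hA.eigenvalues i with hμ
  rcases le_or_gt μ 0 with h | h
  · exact h.trans (Real.sqrt_nonneg _)
  · have hsq : μ ^ 2 ≤ (m : ℝ) := by
      rw [hm]
      refine nosal_sq G hG μ (⇑(hA.eigenvectorBasis i)) ?_ (hA.mulVec_eigenvectorBasis i)
      intro hzero
      exact hA.eigenvectorBasis.orthonormal.ne_zero i (by ext v; exact congrFun hzero v)
    calc μ = Real.sqrt (μ ^ 2) := (Real.sqrt_sq h.le).symm
      _ ≤ Real.sqrt m := Real.sqrt_le_sqrt hsq
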